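/- arXiv:1906.10357 — 5 statements merged into one kernel-verified Lean document; each statement's English description precedes it below -/
import Mathlib

section
/- Let A(X,Y) and B(Y,Z) be propositional formulas with A ∧ B unsatisfiable (equivalently A ⇒ ¬B where ¬B is viewed over Y,Z). Let W = X ∪ Z and let A*(Y) satisfy ∃W.(A ∧ B) ≡ A* ∧ ∃W.B together with A ⇒ A*. Then A ⇒ A* ⇒ ¬B, i.e., A* is an interpolant for (A, ¬B). -/
abbrev Var := ℕ
abbrev Assn := Var → Bool
abbrev Lit := Var × Bool
abbrev Clause := Set Lit
abbrev CNF := Set Clause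

/-- An assignment satisfies a clause iff it makes some literal true. -/
def clauseSat (a : Assn) (C : Clause) : Prop := ∃ l ∈ C, a l.1 = l.2
/-- An assignment satisfies a CNF formula iff it satisfies every clause. -/
def cnfSat (a : Assn) (F : CNF) : Prop := ∀ C ∈ F, clauseSat a C
/-- `a ⊨ ∃X.F`: some assignment agreeing with `a` outside `X` satisfies `F`. -/
def exSat (X : Set Var) (F : CNF) (a : Assn) : Prop :=
  ∃ a' : Assn, (∀ v ∉ X, a' v = a v) ∧ cnfSat a' F
/-- Logical equivalence of `∃X.F` and `∃X.G`. -/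
def equivQ (X : Set Var) (F G : CNF) : Prop := ∀ a : Assn, exSat X F a ↔ exSat X G a

/-- A partial assignment. -/
abbrev PAssn := Var → Option Bool
/-- Clause `C` is satisfied by partial assignment `q`. -/
def satByQ (q : PAssn) (C : Clause) : Prop := ∃ l ∈ C, q l.1 = some l.2
/-- Restriction of a (non-satisfied) clause under `q`: falsified literals removed. -/
def resC (q : PAssn) (C : Clause) : Clause := {l ∈ C | q l.1 = none}
/-- Restriction `F|_q` of a CNF formula: satisfied clauses removed, remaining clauses restricted. -/
def resF (q : PAssn) (F : CNF) : CNF := {D | ∃ C ∈ F, ¬ satByQ q C ∧ D = resC q C}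
/-- The D-sequent `(∃X.F, q, H) → C` holds: for every member formula `W` with
`H ∪ {C} ⊆ W ⊆ F` whose restriction is logically equivalent (under `∃X`) to `F|_q`,
the clause `C|_q` is redundant in `∃X.(W|_q)`. -/
def DseqHolds (X : Set Var) (F : CNF) (q : PAssn) (H : Set Clause) (C : Clause) : Prop :=
  ∀ W : CNF, H ∪ {C} ⊆ W → W ⊆ F → equivQ X (resF q W) (resF q F) →
    equivQ X (resF q W) (resF q (W \ {C}))


/-- `P` depends only on the variables in `V`. -/
def depOnly (P : Assn → Prop) (V : Set Var) : Prop :=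
  ∀ a a' : Assn, (∀ v ∈ V, a v = a' v) → (P a ↔ P a')
/-- `a ⊨ ∃X.P` for a general propositional predicate `P`. -/
def exSatP (X : Set Var) (P : Assn → Prop) (a : Assn) : Prop :=
  ∃ a' : Assn, (∀ v ∉ X, a' v = a v) ∧ P a'

/-- Interpolation as a special case of PQE: if `A ∧ B` is unsatisfiable,
`∃W.(A ∧ B) ≡ A* ∧ ∃W.B` with `W = X ∪ Z`, and `A ⇒ A*`, then `A ⇒ A* ⇒ ¬B`,
i.e. `A*` is an interpolant for `(A, ¬B)`. -/
theorem stmt2 (X Y Z : Set Var) (A B Astar : Assn → Prop)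
    (hXY : Disjoint X Y) (hXZ : Disjoint X Z) (hYZ : Disjoint Y Z)
    (hA : depOnly A (X ∪ Y)) (hB : depOnly B (Y ∪ Z)) (hAs : depOnly Astar Y)
    (hUnsat : ∀ a, ¬ (A a ∧ B a))
    (hpqe : ∀ a, exSatP (X ∪ Z) (fun a' => A a' ∧ B a') a ↔
        (Astar a ∧ exSatP (X ∪ Z) B a))
    (himp : ∀ a, A a → Astar a) :
    (∀ a, A a → Astar a) ∧ (∀ a, Astar a → ¬ B a) := by
  refine ⟨himp, fun a hAs hB => ?_⟩
  obtain ⟨a', _, hab⟩ := (hpqe a).mpr ⟨hAs, a, fun v _ => rfl, hB⟩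
  exact hUnsat a' hab
end

section
/- Let F be a CNF formula, X a subset of its variables, C an X-clause of F, and v a variable of C with v ∈ X. If C is blocked at v in F (no clause of F \ {C} is resolvable with C on v), then C is redundant in ∃X.F, i.e., ∃X.F ≡ ∃X.(F \ {C}). -/
/-- Clauses `C'`, `C''` are resolvable on `v`: they have opposite literals of `v`
and of no other variable. -/
def resolvable (C' C'' : Clause) (v : Var) : Prop :=
  (∃ b, (v, b) ∈ C' ∧ (v, !b) ∈ C'') ∧ ∀ w b, w ≠ v → (w, b) ∈ C' → (w, !b) ∉ C''

/-- A clause blocked at a quantified variable is redundant in `∃X.F`. -/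
theorem stmt3 (X : Set Var) (F : CNF) (C : Clause) (v : Var) (b : Bool)
    (hC : C ∈ F) (hv : (v, b) ∈ C) (hvX : v ∈ X)
    (hblocked : ∀ B ∈ F \ {C}, ¬ resolvable C B v) :
    equivQ X F (F \ {C}) := by
  intro a
  constructor
  · rintro ⟨a', ha', hsat⟩
    exact ⟨a', ha', fun D hD => hsat D hD.1⟩
  · rintro ⟨a', ha', hsat⟩
    by_cases hc : clauseSat a' C
    · refine ⟨a', ha', fun D hD => ?_⟩
      by_cases hDC : D = C
      · exact hDC ▸ hc
      · exact hsat D ⟨hD, hDC⟩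
    · set a'' : Assn := fun w => if w = v then b else a' w with ha''
      refine ⟨a'', fun w hw => ?_, fun D hD => ?_⟩
      · have hwv : w ≠ v := fun h => hw (h ▸ hvX)
        simp only [ha'', if_neg hwv]
        exact ha' w hw
      · by_cases hDC : D = C
        · exact ⟨(v, b), hDC ▸ hv, by simp [ha'']⟩
        · obtain ⟨l, hl, hla⟩ := hsat D ⟨hD, hDC⟩
          by_cases hlv : l.1 = v
          · have havnb : a' v = !b := by
              have h : a' v ≠ b := fun h => hc ⟨(v, b), hv, h⟩
              revert h; cases a' v <;> cases b <;> simp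
            have hl2 : l.2 = !b := by
              rw [hlv] at hla
              exact hla.symm.trans havnb
            have hlD : (v, !b) ∈ D := by
              have he : l = (v, !b) := Prod.ext hlv hl2
              rwa [he] at hl
            have hnres := hblocked D ⟨hD, hDC⟩
            rw [resolvable, not_and_or] at hnres
            rcases hnres with h1 | h2
            · exact absurd ⟨b, hv, hlD⟩ h1
            · push_neg at h2
              obtain ⟨w, b', hwv, hwC, hwD⟩ := h2
              have hawb : a' w ≠ b' := fun h => hc ⟨(w, b'), hwC, h⟩
              have haw : a' w = !b' := by
                revert hawb; cases a' w <;> cases b' <;> simp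
              exact ⟨(w, !b'), hwD, by simp only [ha'', if_neg hwv]; exact haw⟩
          · exact ⟨l, hl, by simp only [ha'', if_neg hlv]; exact hla⟩
end

section
/- Atomic D-sequents of the second kind are correct: let F be a CNF formula with quantified variables X, q an assignment to the variables of F, C an X-clause of F and B ∈ F with B ≠ C. Suppose C|_q is still an X-clause and B|_q implies C|_q (every literal of B|_q is a literal of C|_q). Then the D-sequent (∃X.F, q, {B}) → C holds: for every W with {B, C} ⊆ W ⊆ F, the clause C|_q is redundant in ∃X.(W|_q). -/
/-- Atomic D-sequents of the second kind are correct: if `C|_q` is still an `X`-clause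
and `B|_q` implies (subsumes) `C|_q`, then the D-sequent `(∃X.F, q, {B}) → C` holds. -/
theorem stmt6 (X : Set Var) (F : CNF) (q : PAssn) (C B : Clause)
    (hC : C ∈ F) (hB : B ∈ F) (hne : B ≠ C)
    (hXcl : ∃ l ∈ C, l.1 ∈ X)
    (hXres : ¬ satByQ q C ∧ ∃ l ∈ resC q C, l.1 ∈ X)
    (himp : ¬ satByQ q B ∧ resC q B ⊆ resC q C) :
    DseqHolds X F q {B} C := by
  intro W hHW hWF _ a
  have hBW : B ∈ W := hHW (Or.inl rfl)
  constructor
  · rintro ⟨a', ha1, ha2⟩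
    exact ⟨a', ha1, fun D hD => ha2 D ⟨hD.choose, hD.choose_spec.1.1, hD.choose_spec.2⟩⟩
  · rintro ⟨a', ha1, ha2⟩
    refine ⟨a', ha1, ?_⟩
    rintro D ⟨D0, hD0, hns, rfl⟩
    by_cases hDC : D0 = C
    · have hBmem : resC q B ∈ resF q (W \ ({C} : Set Clause)) :=
        ⟨B, ⟨hBW, hne⟩, himp.1, rfl⟩
      obtain ⟨l, hl, hval⟩ := ha2 _ hBmem
      rw [hDC]
      exact ⟨l, himp.2 hl, hval⟩
    · exact ha2 _ ⟨D0, ⟨hD0, hDC⟩, hns, rfl⟩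
end

section
/- Solution criterion for PQE via redundancy: let F₁(X,Y) and F₂(X,Y) be CNF formulas where every clause of F₁ contains at least one variable of X, and let F₁*(Y) be a CNF formula over Y implied by F₁ ∧ F₂. If every clause of F₁ is redundant in ∃X.(F₁* ∧ F₁ ∧ F₂), i.e., ∃X.(F₁* ∧ F₁ ∧ F₂) ≡ ∃X.(F₁* ∧ F₂), then F₁* is a solution of the PQE problem: F₁* ∧ ∃X.F₂ ≡ ∃X.(F₁ ∧ F₂). -/
/-- Solution criterion for PQE via redundancy: if every clause of `F₁` is an `X`-clause,
`F₁*` is over `Y` and implied by `F₁ ∧ F₂`, and the clauses of `F₁` are redundant in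
`∃X.(F₁* ∧ F₁ ∧ F₂)`, then `F₁* ∧ ∃X.F₂ ≡ ∃X.(F₁ ∧ F₂)`. -/
theorem stmt14 (X Y : Set Var) (F1 F2 F1s : CNF)
    (hdisj : Disjoint X Y)
    (hXcl : ∀ C ∈ F1, ∃ l ∈ C, l.1 ∈ X)
    (hYonly : ∀ C ∈ F1s, ∀ l ∈ C, l.1 ∈ Y)
    (himp : ∀ a, cnfSat a (F1 ∪ F2) → cnfSat a F1s)
    (hred : equivQ X (F1s ∪ F1 ∪ F2) (F1s ∪ F2)) :
    ∀ a, (cnfSat a F1s ∧ exSat X F2 a) ↔ exSat X (F1 ∪ F2) a := by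
  intro a
  have hF1sEq : ∀ (a1 a2 : Assn), (∀ v ∉ X, a1 v = a2 v) →
      cnfSat a1 F1s → cnfSat a2 F1s := by
    intro a1 a2 hag h C hC
    obtain ⟨l, hl, hv⟩ := h C hC
    refine ⟨l, hl, ?_⟩
    rw [← hag l.1 (fun hx => hdisj.ne_of_mem hx (hYonly C hC l hl) rfl)]
    exact hv
  constructor
  · rintro ⟨hs, a', hag, h2⟩
    have hs' : cnfSat a' (F1s ∪ F2) := by
      intro C hC
      rcases hC with hC | hC
      · exact hF1sEq a a' (fun v hv => (hag v hv).symm) hs C hC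
      · exact h2 C hC
    have : exSat X (F1s ∪ F1 ∪ F2) a := (hred a).2 ⟨a', hag, hs'⟩
    obtain ⟨b, hbag, hb⟩ := this
    exact ⟨b, hbag, fun C hC => hb C (by rcases hC with h|h; exact Or.inl (Or.inr h); exact Or.inr h)⟩
  · rintro ⟨a', hag, h⟩
    have hs' : cnfSat a' F1s := himp a' h
    refine ⟨hF1sEq a' a hag hs', a', hag, fun C hC => h C (Or.inr hC)⟩
end

section
/- Reachability diameter criterion via clause redundancy: let T(S,S') be a transition relation and I(S) an initial-state predicate over state variables. For n ≥ 0, let G_{0,n+1} = T(S₀,S₁) ∧ ... ∧ T(S_n,S_{n+1}), W_n = S₀ ∪ ... ∪ S_n, I₀ = I(S₀), I₁ = I(S₁). If ∃W_n.(I₁ ∧ I₀ ∧ G_{0,n+1}) ≡ ∃W_n.(I₀ ∧ G_{0,n+1}), then every state reachable in n+1 transitions from an initial state is reachable in at most n transitions; consequently the reachability diameter is at most n. -/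
/-- State `s` is reachable in exactly `k` transitions from an initial state. -/
def reachIn {State : Type} (I : State → Prop) (T : State → State → Prop)
    (k : ℕ) (s : State) : Prop :=
  ∃ p : ℕ → State, I (p 0) ∧ (∀ i < k, T (p i) (p (i + 1))) ∧ p k = s

/-- Reachability diameter criterion: if `∃Wₙ.(I₁ ∧ I₀ ∧ G) ≡ ∃Wₙ.(I₀ ∧ G)` as
formulas over the `(n+1)`-st state copy, then every state reachable in `n+1`
transitions is reachable in at most `n` transitions; consequently every reachable
state is reachable in at most `n` transitions (the diameter is at most `n`). -/
theorem stmt18 (State : Type) (I : State → Prop) (T : State → State → Prop) (n : ℕ)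
    (htotal : ∀ s, ∃ s', T s s')
    (hequiv : ∀ s : State,
      (∃ p : ℕ → State, I (p 0) ∧ I (p 1) ∧ (∀ i < n + 1, T (p i) (p (i + 1))) ∧
        p (n + 1) = s) ↔
      (∃ p : ℕ → State, I (p 0) ∧ (∀ i < n + 1, T (p i) (p (i + 1))) ∧
        p (n + 1) = s)) :
    (∀ s, reachIn I T (n + 1) s → ∃ k ≤ n, reachIn I T k s) ∧
    (∀ s k, reachIn I T k s → ∃ m ≤ n, reachIn I T m s) := by
  have part1 : ∀ s, reachIn I T (n + 1) s → reachIn I T n s := by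
    intro s hs
    obtain ⟨p, hI0, hI1, hT, hpe⟩ := (hequiv s).mpr hs
    refine ⟨fun i => p (i + 1), hI1, fun i hi => hT (i + 1) (by omega), hpe⟩
  have step : ∀ k s, n + 1 ≤ k → reachIn I T k s → reachIn I T (k - 1) s := by
    intro k s hk ⟨p, hI0, hT, hpe⟩
    have hmid : reachIn I T (n + 1) (p (n + 1)) :=
      ⟨p, hI0, fun i hi => hT i (by omega), rfl⟩
    obtain ⟨q, hqI, hqT, hqe⟩ := part1 _ hmid
    refine ⟨fun i => if i ≤ n then q i else p (i + 1), by simpa using hqI, ?_, ?_⟩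
    · intro i hi
      by_cases h1 : i ≤ n
      · by_cases h2 : i + 1 ≤ n
        · simp only [if_pos h1, if_pos h2]; exact hqT i (by omega)
        · simp only [if_pos h1, if_neg h2]
          have hin : i = n := by omega
          rw [hin, hqe]
          exact hT (n + 1) (by omega)
      · simp only [if_neg h1, if_neg (show ¬ i + 1 ≤ n by omega)]
        exact hT (i + 1) (by omega)
    · show (if k - 1 ≤ n then q (k - 1) else p (k - 1 + 1)) = s
      by_cases h : k - 1 ≤ n
      · rw [if_pos h, show k - 1 = n from by omega, hqe, ← hpe]
        congr 1
        omega
      · rw [if_neg h, show k - 1 + 1 = k from by omega, hpe]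
  have part2 : ∀ k s, reachIn I T k s → ∃ m ≤ n, reachIn I T m s := by
    intro k
    induction k using Nat.strong_induction_on with
    | _ k ih =>
      intro s hs
      by_cases hk : k ≤ n
      · exact ⟨k, hk, hs⟩
      · exact ih (k - 1) (by omega) s (step k s (by omega) hs)
  exact ⟨fun s hs => ⟨n, le_refl n, part1 s hs⟩, fun s k => part2 k s⟩
end
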